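/- For each n ≥ 1 and all real x, sin(n · arccot(x)) = (-1)^{n-1} · q_{n-1}(x) / (1+x²)^{n/2}, where arccot(x) = π/2 - arctan(x). -/
import Mathlib


open Finset Polynomial Real

noncomputable def q (n : ℕ) (x : ℝ) : ℝ :=
  (-1 : ℝ)^n * ∑ k ∈ (Finset.range (n+1)).filter (fun k => Even k),
    ((n+1).choose (k+1) : ℝ) * (-1 : ℝ)^(k/2) * x^(n-k)

noncomputable def arccot (x : ℝ) : ℝ := Real.pi / 2 - Real.arctan x

lemma im_I_pow_succ (k : ℕ) :
    (Complex.I ^ (k+1)).im = if Even k then (-1:ℝ)^(k/2) else 0 := by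
  rcases Nat.even_or_odd k with ⟨m, hm⟩ | ⟨m, hm⟩
  · subst hm
    have h2 : m + m = 2 * m := by ring
    rw [if_pos ⟨m, rfl⟩, pow_succ, h2, pow_mul, Complex.I_sq]
    have hc : ((-1 : ℂ))^m = (((-1:ℝ)^m : ℝ) : ℂ) := by push_cast; ring
    rw [hc]
    simp only [Complex.mul_im, Complex.ofReal_re, Complex.ofReal_im, Complex.I_re, Complex.I_im, mul_one, mul_zero, add_zero, zero_add]
    congr 1
    omega
  · subst hm
    rw [if_neg (by simp [Nat.even_add_one, parity_simps])]
    have h2 : 2 * m + 1 + 1 = 2 * (m + 1) := by ring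
    rw [h2, pow_mul, Complex.I_sq]
    have hc : ((-1 : ℂ))^(m+1) = (((-1:ℝ)^(m+1) : ℝ) : ℂ) := by push_cast; ring
    rw [hc, Complex.ofReal_im]

lemma im_pow (n : ℕ) (x : ℝ) :
    (((x:ℂ) + Complex.I)^n).im
      = ∑ k ∈ (Finset.range n).filter (fun k => Even k),
          (n.choose (k+1) : ℝ) * (-1 : ℝ)^(k/2) * x^(n-1-k) := by
  rw [add_pow, Complex.im_sum]
  have hrefl := (Finset.sum_range_reflect
    (fun j => (((x:ℂ))^j * Complex.I ^ (n - j) * (n.choose j : ℂ)).im) (n+1))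
  rw [← hrefl]
  have hstep : ∀ j ∈ Finset.range (n+1),
      (((x:ℂ))^(n + 1 - 1 - j) * Complex.I ^ (n - (n + 1 - 1 - j)) *
        ((n.choose (n + 1 - 1 - j)) : ℂ)).im
      = x^(n-j) * (Complex.I ^ j).im * (n.choose j : ℝ) := by
    intro j hj
    rw [Finset.mem_range] at hj
    have hj' : j ≤ n := by omega
    have h1 : n + 1 - 1 - j = n - j := by omega
    have h2 : n - (n - j) = j := by omega
    have h3 : n.choose (n - j) = n.choose j := Nat.choose_symm hj'
    rw [h1, h2, h3]
    have : ((x:ℂ))^(n-j) * Complex.I ^ j * ((n.choose j : ℕ) : ℂ)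
        = ((x^(n-j) * (n.choose j : ℝ) : ℝ) : ℂ) * Complex.I ^ j := by
      push_cast; ring
    rw [this]
    simp only [Complex.mul_im, Complex.ofReal_re, Complex.ofReal_im, zero_mul, add_zero]
    ring
  rw [Finset.sum_congr rfl hstep, Finset.sum_range_succ']
  simp only [pow_zero, Complex.one_im, mul_zero, zero_mul, add_zero]
  rw [Finset.sum_filter]
  refine Finset.sum_congr rfl ?_
  intro k hk
  rw [im_I_pow_succ]
  by_cases h : Even k
  · rw [if_pos h, if_pos h]
    have : n - (k+1) = n - 1 - k := by omega
    rw [this]; ring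
  · rw [if_neg h, if_neg h]; ring

theorem sin_n_arccot (n : ℕ) (hn : 1 ≤ n) (x : ℝ) :
    Real.sin (n * arccot x) = (-1 : ℝ)^(n-1) * q (n-1) x / Real.sqrt ((1 + x^2)^n) := by
  set θ := arccot x with hθ
  set r := Real.sqrt (1 + x^2) with hr
  have h0 : (0:ℝ) ≤ 1 + x^2 := by positivity
  have hrpos : 0 < r := Real.sqrt_pos.2 (by positivity)
  have hcos : Real.cos θ = x / r := by
    rw [hθ]; unfold arccot
    rw [Real.cos_pi_div_two_sub, Real.sin_arctan]
  have hsin : Real.sin θ = 1 / r := by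
    rw [hθ]; unfold arccot
    rw [Real.sin_pi_div_two_sub, Real.cos_arctan]
  have hxi : ((x:ℂ) + Complex.I) = (r : ℂ) * Complex.exp (θ * Complex.I) := by
    apply Complex.ext
    · simp [Complex.exp_ofReal_mul_I_re, hcos]
      field_simp
    · simp [Complex.exp_ofReal_mul_I_im, hsin]
      field_simp
  have hpow : (((x:ℂ) + Complex.I))^n
      = ((r^n : ℝ) : ℂ) * Complex.exp ((n * θ : ℝ) * Complex.I) := by
    rw [hxi, mul_pow, ← Complex.exp_nat_mul]
    push_cast
    ring_nf
  have him : (((x:ℂ) + Complex.I)^n).im = r^n * Real.sin (n * θ) := by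
    rw [hpow]
    simp only [Complex.mul_im, Complex.ofReal_re, Complex.ofReal_im, zero_mul, add_zero,
      Complex.exp_ofReal_mul_I_im]
  have hsqrt : Real.sqrt ((1 + x^2)^n) = r^n := by
    rw [show (1 + x^2) = r^2 from (Real.sq_sqrt h0).symm, ← pow_mul, mul_comm 2 n,
      pow_mul, Real.sqrt_sq (by positivity)]
  have hsum := im_pow n x
  have hq : (-1 : ℝ)^(n-1) * q (n-1) x = (((x:ℂ) + Complex.I)^n).im := by
    rw [hsum, q]
    have hn1 : n - 1 + 1 = n := by omega
    rw [hn1, ← mul_assoc, ← pow_add, Even.neg_one_pow ⟨n-1, rfl⟩, one_mul]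
  have hrn : (0:ℝ) < r^n := by positivity
  rw [hsqrt, hq, him]
  field_simp
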